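/- The double integral ∫₀^∞ ∫₀^∞ dx dy / ((x+1)(y+1)(x+y)) equals π²/4. -/

import Mathlib

open MeasureTheory Set Real

namespace SunsetAux

open Filter Topology

lemma inner_eval {x : ℝ} (hx : 0 < x) (hx1 : x ≠ 1) :
    IntegrableOn (fun y => 1 / ((y + 1) * (x + y))) (Ioi (0:ℝ)) ∧
    ∫ y in Ioi (0:ℝ), 1 / ((y + 1) * (x + y)) = Real.log x / (x - 1) := by
  have h1x : (1:ℝ) - x ≠ 0 := by intro h; apply hx1; linarith
  set g : ℝ → ℝ := fun y => (1 - x)⁻¹ * (Real.log (y + x) - Real.log (y + 1)) with hg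
  have hderiv : ∀ y ∈ Ici (0:ℝ), HasDerivAt g (1 / ((y + 1) * (x + y))) y := by
    intro y hy
    have hyx : (0:ℝ) < y + x := by simp only [mem_Ici] at hy; linarith
    have hy1 : (0:ℝ) < y + 1 := by simp only [mem_Ici] at hy; linarith
    have d1 : HasDerivAt (fun y : ℝ => Real.log (y + x)) (1 / (y + x)) y := by
      simpa using ((hasDerivAt_id y).add_const x).log hyx.ne'
    have d2 : HasDerivAt (fun y : ℝ => Real.log (y + 1)) (1 / (y + 1)) y := by
      simpa using ((hasDerivAt_id y).add_const 1).log hy1.ne'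
    have d := (d1.sub d2).const_mul ((1 - x)⁻¹)
    refine HasDerivAt.congr_deriv d ?_
    have hxy : (0:ℝ) < x + y := by linarith
    have hD : ((y + 1) * (x + y)) ≠ 0 := (mul_pos hy1 hxy).ne'
    have e1 : (1:ℝ) / (y + x) - 1 / (y + 1) = (1 - x) / ((y + 1) * (x + y)) := by
      rw [div_sub_div _ _ hyx.ne' hy1.ne', div_eq_div_iff (mul_pos hyx hy1).ne' hD]
      ring
    rw [e1, mul_div_assoc', inv_mul_cancel₀ h1x]
  have hpos : ∀ y ∈ Ioi (0:ℝ), 0 ≤ 1 / ((y + 1) * (x + y)) := by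
    intro y hy
    have : (0:ℝ) < y := hy
    positivity
  have htend : Tendsto g atTop (𝓝 0) := by
    have t1 : Tendsto (fun y : ℝ => (y + x) / (y + 1)) atTop (𝓝 1) := by
      have he : (fun y : ℝ => 1 + (x - 1) / (y + 1)) =ᶠ[atTop]
          (fun y : ℝ => (y + x) / (y + 1)) := by
        filter_upwards [eventually_gt_atTop (0:ℝ)] with y hy
        have : y + 1 ≠ 0 := by positivity
        field_simp
        ring
      have t0 : Tendsto (fun y : ℝ => (x - 1) / (y + 1)) atTop (𝓝 0) :=
        tendsto_const_nhds.div_atTop (tendsto_atTop_add_const_right _ 1 tendsto_id)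
      have t3 := (tendsto_const_nhds (x := (1:ℝ))).add t0
      simpa using t3.congr' he
    have t2 : Tendsto (fun y : ℝ => (1 - x)⁻¹ * Real.log ((y + x) / (y + 1))) atTop
        (𝓝 ((1 - x)⁻¹ * Real.log 1)) :=
      (((Real.continuousAt_log one_ne_zero).tendsto).comp t1).const_mul _
    rw [Real.log_one, mul_zero] at t2
    apply t2.congr'
    filter_upwards [eventually_gt_atTop (0:ℝ)] with y hy
    have hyx : (0:ℝ) < y + x := by linarith
    have hy1 : (0:ℝ) < y + 1 := by linarith
    rw [hg]
    simp only
    rw [Real.log_div hyx.ne' hy1.ne']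
  refine ⟨integrableOn_Ioi_deriv_of_nonneg' hderiv hpos htend, ?_⟩
  rw [integral_Ioi_of_hasDerivAt_of_nonneg' hderiv hpos htend]
  rw [hg]
  simp only [zero_add, Real.log_one, sub_zero]
  have hx1' : x - 1 ≠ 0 := by intro h; apply hx1; linarith
  field_simp
  ring

lemma exp_integral (r : ℝ) (hr : 0 < r) :
    IntegrableOn (fun t => t * Real.exp (-(r * t))) (Ioi (0:ℝ)) ∧
    ∫ t in Ioi (0:ℝ), t * Real.exp (-(r * t)) = 1 / r ^ 2 := by
  set G : ℝ → ℝ := fun t => -((t / r + 1 / r ^ 2) * Real.exp (-(r * t))) with hG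
  have hderiv : ∀ t ∈ Ici (0:ℝ), HasDerivAt G (t * Real.exp (-(r * t))) t := by
    intro t _
    have d1 : HasDerivAt (fun t : ℝ => t / r + 1 / r ^ 2) (1 / r) t :=
      ((hasDerivAt_id t).div_const r).add_const _
    have d2 : HasDerivAt (fun t : ℝ => Real.exp (-(r * t))) (Real.exp (-(r * t)) * (-r)) t := by
      have : HasDerivAt (fun t : ℝ => -(r * t)) (-r) t := by
        exact ((hasDerivAt_id t).const_mul r).neg.congr_deriv (by ring)
      exact this.exp
    have d := (d1.mul d2).neg
    refine HasDerivAt.congr_deriv d ?_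
    field_simp
    ring
  have hpos : ∀ t ∈ Ioi (0:ℝ), 0 ≤ t * Real.exp (-(r * t)) := by
    intro t ht
    have : (0:ℝ) < t := ht
    positivity
  have htend : Tendsto G atTop (𝓝 0) := by
    have A : Tendsto (fun u : ℝ => u * Real.exp (-u)) atTop (𝓝 0) := by
      simpa using tendsto_pow_mul_exp_neg_atTop_nhds_zero 1
    have B : Tendsto (fun u : ℝ => Real.exp (-u)) atTop (𝓝 0) :=
      Real.tendsto_exp_neg_atTop_nhds_zero
    have C : Tendsto (fun u : ℝ => (r ^ 2)⁻¹ * (u * Real.exp (-u)) +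
        (r ^ 2)⁻¹ * Real.exp (-u)) atTop (𝓝 0) := by
      simpa using (A.const_mul ((r ^ 2)⁻¹)).add (B.const_mul ((r ^ 2)⁻¹))
    have hc : Tendsto (fun t : ℝ => r * t) atTop atTop :=
      Tendsto.const_mul_atTop hr tendsto_id
    have := (C.comp hc).neg
    rw [neg_zero] at this
    apply this.congr
    intro t
    simp only [Function.comp_apply, hG]
    have hr' : r ≠ 0 := hr.ne'
    field_simp
  refine ⟨integrableOn_Ioi_deriv_of_nonneg' hderiv hpos htend, ?_⟩
  rw [integral_Ioi_of_hasDerivAt_of_nonneg' hderiv hpos htend, hG]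
  simp

lemma exp_image : (fun t : ℝ => Real.exp (-t)) '' Ioi (0:ℝ) = Ioo (0:ℝ) 1 := by
  ext u
  constructor
  · rintro ⟨t, ht, rfl⟩
    exact ⟨Real.exp_pos _, Real.exp_lt_one_iff.mpr (by simpa using (ht : (0:ℝ) < t))⟩
  · rintro ⟨hu0, hu1⟩
    refine ⟨-Real.log u, ?_, by simp [Real.exp_log hu0]⟩
    simpa using Real.log_neg hu0 hu1

lemma term_eval (n : ℕ) :
    IntegrableOn (fun x => (-Real.log x) * x ^ n) (Ioo (0:ℝ) 1) ∧
    ∫ x in Ioo (0:ℝ) 1, (-Real.log x) * x ^ n = 1 / ((n : ℝ) + 1) ^ 2 := by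
  have hr : (0:ℝ) < (n : ℝ) + 1 := by positivity
  have hderiv : ∀ t ∈ Ioi (0:ℝ), HasDerivWithinAt (fun t : ℝ => Real.exp (-t))
      (-Real.exp (-t)) (Ioi (0:ℝ)) t := by
    intro t _
    have : HasDerivAt (fun t : ℝ => Real.exp (-t)) (Real.exp (-t) * (-1)) t :=
      (hasDerivAt_id t).neg.exp
    simpa using this.hasDerivWithinAt
  have hinj : InjOn (fun t : ℝ => Real.exp (-t)) (Ioi (0:ℝ)) :=
    (Real.exp_injective.comp neg_injective).injOn
  have hkey : ∀ t ∈ Ioi (0:ℝ),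
      |(-Real.exp (-t))| • ((fun x => (-Real.log x) * x ^ n) (Real.exp (-t)))
       = t * Real.exp (-(((n : ℝ) + 1) * t)) := by
    intro t _
    rw [abs_neg, abs_of_pos (Real.exp_pos _), smul_eq_mul]
    simp only [Real.log_exp, neg_neg]
    rw [← Real.exp_nat_mul]
    have h2 : Real.exp (-t) * (t * Real.exp ((n:ℝ) * -t)) = t * Real.exp (-t + (n:ℝ) * -t) := by
      rw [Real.exp_add]; ring
    rw [h2]
    congr 1
    ring_nf
  constructor
  · rw [← exp_image,
      integrableOn_image_iff_integrableOn_abs_deriv_smul measurableSet_Ioi hderiv hinj]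
    exact ((exp_integral _ hr).1).congr_fun (fun t ht => (hkey t ht).symm) measurableSet_Ioi
  · rw [← exp_image,
      integral_image_eq_integral_abs_deriv_smul measurableSet_Ioi hderiv hinj,
      setIntegral_congr_fun measurableSet_Ioi hkey, (exp_integral _ hr).2]

lemma odd_sum : HasSum (fun n : ℕ => 1 / (2 * (n : ℝ) + 1) ^ 2) (π ^ 2 / 8) := by
  have H := hasSum_zeta_two
  have heven : HasSum (fun k : ℕ => (1:ℝ) / ((2 * k : ℕ) : ℝ) ^ 2) (π ^ 2 / 24) := by
    have h4 := H.mul_left (1 / 4)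
    rw [show (1:ℝ) / 4 * (π ^ 2 / 6) = π ^ 2 / 24 by ring] at h4
    have he : (fun k : ℕ => (1:ℝ) / ((2 * k : ℕ) : ℝ) ^ 2)
        = fun k : ℕ => 1 / 4 * (1 / (k:ℝ) ^ 2) := by
      funext k
      rw [show ((2 * k : ℕ) : ℝ) ^ 2 = 4 * (k:ℝ) ^ 2 by push_cast; ring, ← one_div_mul_one_div]
    rw [he]
    exact h4
  have hinj : Function.Injective (fun k : ℕ => 2 * k + 1) := fun a b hab => by dsimp at hab; omega
  obtain ⟨S, hS⟩ : Summable fun k : ℕ => (1:ℝ) / ((2 * k + 1 : ℕ) : ℝ) ^ 2 :=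
    H.summable.comp_injective hinj
  have hodd := HasSum.even_add_odd (f := fun m : ℕ => (1:ℝ) / (m:ℝ) ^ 2) heven hS
  have hSval : S = π ^ 2 / 8 := by
    have h6 := hodd.unique H
    linarith
  rw [hSval] at hS
  have he2 : (fun k : ℕ => (1:ℝ) / ((2 * k + 1 : ℕ) : ℝ) ^ 2)
      = fun n : ℕ => 1 / (2 * (n : ℝ) + 1) ^ 2 := by
    funext n; push_cast; ring
  rwa [he2] at hS

noncomputable def h (x : ℝ) : ℝ := Real.log x / ((x + 1) * (x - 1))

lemma h_eq_tsum {x : ℝ} (hx : x ∈ Ioo (0:ℝ) 1) :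
    h x = ∑' n : ℕ, (-Real.log x) * x ^ (2 * n) := by
  obtain ⟨hx0, hx1⟩ := hx
  have hx2 : x ^ 2 < 1 := by nlinarith
  have hsum : ∑' n : ℕ, (x ^ 2) ^ n = (1 - x ^ 2)⁻¹ :=
    tsum_geometric_of_lt_one (by positivity) hx2
  calc h x = (-Real.log x) * (1 - x ^ 2)⁻¹ := by
        rw [h]
        have h1 : (x + 1) * (x - 1) = -(1 - x ^ 2) := by ring
        rw [h1, div_neg, div_eq_mul_inv, ← neg_mul]
    _ = ∑' n : ℕ, (-Real.log x) * (x ^ 2) ^ n := by rw [← hsum, tsum_mul_left]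
    _ = ∑' n : ℕ, (-Real.log x) * x ^ (2 * n) := by
        congr 1; funext n; rw [pow_mul]

lemma h_nonneg {x : ℝ} (hx : x ∈ Ioo (0:ℝ) 1) : 0 ≤ h x := by
  obtain ⟨hx0, hx1⟩ := hx
  have hlog : Real.log x ≤ 0 := Real.log_nonpos hx0.le hx1.le
  have hden : (x + 1) * (x - 1) < 0 := mul_neg_of_pos_of_neg (by linarith) (by linarith)
  rw [h, ← neg_div_neg_eq]
  exact div_nonneg (by linarith) (by linarith)

lemma h_meas : Measurable h :=
  Real.measurable_log.div (((measurable_id.add_const 1).mul (measurable_id.sub_const 1)))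

lemma lintegral_h :
    ∫⁻ x in Ioo (0:ℝ) 1, ENNReal.ofReal (h x) = ENNReal.ofReal (π ^ 2 / 8) := by
  have step1 : ∫⁻ x in Ioo (0:ℝ) 1, ENNReal.ofReal (h x)
      = ∫⁻ x in Ioo (0:ℝ) 1, ∑' n : ℕ, ENNReal.ofReal ((-Real.log x) * x ^ (2 * n)) := by
    apply setLIntegral_congr_fun measurableSet_Ioo
    intro x hx
    beta_reduce
    rw [h_eq_tsum hx]
    have hterm : ∀ n : ℕ, 0 ≤ (-Real.log x) * x ^ (2 * n) := by
      intro n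
      have h1 : 0 ≤ -Real.log x := by
        simpa using Real.log_nonpos hx.1.le hx.2.le
      exact mul_nonneg h1 (pow_nonneg hx.1.le _)
    have hsummable : Summable fun n : ℕ => (-Real.log x) * x ^ (2 * n) := by
      apply Summable.mul_left
      have : Summable fun n : ℕ => (x ^ 2) ^ n :=
        summable_geometric_of_lt_one (by positivity) (by nlinarith [hx.1, hx.2])
      exact this.congr fun n => (pow_mul x 2 n).symm
    exact ENNReal.ofReal_tsum_of_nonneg hterm hsummable
  rw [step1, lintegral_tsum]; swap
  · intro n
    exact ((Real.measurable_log.neg.mul (measurable_id.pow_const _)).ennreal_ofReal).aemeasurable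
  have step2 : ∀ n : ℕ, ∫⁻ x in Ioo (0:ℝ) 1, ENNReal.ofReal ((-Real.log x) * x ^ (2 * n))
      = ENNReal.ofReal (1 / (2 * (n:ℝ) + 1) ^ 2) := by
    intro n
    rw [← ofReal_integral_eq_lintegral_ofReal (term_eval (2 * n)).1]
    · rw [(term_eval (2 * n)).2]
      push_cast
      norm_num
    · rw [EventuallyLE, ae_restrict_iff' measurableSet_Ioo]
      filter_upwards with x hx
      have h1 : 0 ≤ -Real.log x := by simpa using Real.log_nonpos hx.1.le hx.2.le
      exact mul_nonneg h1 (pow_nonneg hx.1.le _)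
  simp_rw [step2]
  rw [← ENNReal.ofReal_tsum_of_nonneg (fun n => by positivity) odd_sum.summable,
    odd_sum.tsum_eq]

lemma B_lemma : IntegrableOn h (Ioo (0:ℝ) 1) ∧ ∫ x in Ioo (0:ℝ) 1, h x = π ^ 2 / 8 := by
  have hnn : 0 ≤ᵐ[volume.restrict (Ioo (0:ℝ) 1)] h := by
    rw [EventuallyLE, ae_restrict_iff' measurableSet_Ioo]
    filter_upwards with x hx
    exact h_nonneg hx
  have hint : IntegrableOn h (Ioo (0:ℝ) 1) := by
    constructor
    · exact h_meas.aestronglyMeasurable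
    · rw [hasFiniteIntegral_iff_ofReal hnn, lintegral_h]
      exact ENNReal.ofReal_lt_top
  refine ⟨hint, ?_⟩
  rw [integral_eq_lintegral_of_nonneg_ae hnn h_meas.aestronglyMeasurable, lintegral_h,
    ENNReal.toReal_ofReal (by positivity)]

lemma inv_image : (fun x : ℝ => x⁻¹) '' Ioo (0:ℝ) 1 = Ioi (1:ℝ) := by
  ext u
  constructor
  · rintro ⟨x, ⟨hx0, hx1⟩, rfl⟩
    exact (one_lt_inv_iff₀.mpr ⟨hx0, hx1⟩ : (1:ℝ) < x⁻¹)
  · intro hu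
    have hu1 : (1:ℝ) < u := hu
    have hu0 : (0:ℝ) < u := lt_trans one_pos hu1
    exact ⟨u⁻¹, ⟨by positivity, inv_lt_one_of_one_lt₀ hu1⟩, inv_inv u⟩

lemma inv_deriv : ∀ x ∈ Ioo (0:ℝ) 1, HasDerivWithinAt (fun x : ℝ => x⁻¹)
    (-(x ^ 2)⁻¹) (Ioo (0:ℝ) 1) x := by
  intro x hx
  exact (hasDerivAt_inv hx.1.ne').hasDerivWithinAt

lemma inv_key : ∀ x ∈ Ioo (0:ℝ) 1, |(-(x ^ 2)⁻¹)| • h x⁻¹ = h x := by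
  intro x hx
  obtain ⟨hx0, hx1⟩ := hx
  have hxi1 : (1:ℝ) < x⁻¹ := one_lt_inv_iff₀.mpr ⟨hx0, hx1⟩
  rw [abs_neg, abs_of_pos (by positivity), smul_eq_mul]
  rw [h, h, Real.log_inv]
  have h1 : x⁻¹ + 1 ≠ 0 := by positivity
  have h2 : x⁻¹ - 1 ≠ 0 := by
    intro hE; rw [sub_eq_zero] at hE; rw [hE] at hxi1; exact lt_irrefl _ hxi1
  have h3 : x + 1 ≠ 0 := by positivity
  have h4 : x - 1 ≠ 0 := by intro hE; rw [sub_eq_zero] at hE; rw [hE] at hx1; exact lt_irrefl _ hx1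
  have h6 : x ^ 2 - x ^ 4 ≠ 0 := by
    have hlt : (0:ℝ) < 1 - x ^ 2 := by nlinarith
    have : (0:ℝ) < x ^ 2 - x ^ 4 := by nlinarith [mul_pos (mul_pos hx0 hx0) hlt]
    exact this.ne'
  have h5 : (1:ℝ) - x ≠ 0 := by intro hE; apply h4; linarith
  have h7 : (1:ℝ) + x ≠ 0 := by positivity
  field_simp [h6]
  ring

lemma C_lemma : IntegrableOn h (Ioi (1:ℝ)) ∧ ∫ x in Ioi (1:ℝ), h x = π ^ 2 / 8 := by
  constructor
  · rw [← inv_image,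
      integrableOn_image_iff_integrableOn_abs_deriv_smul measurableSet_Ioo inv_deriv
        (inv_injective.injOn) h]
    exact B_lemma.1.congr_fun (fun x hx => (inv_key x hx).symm) measurableSet_Ioo
  · rw [← inv_image,
      integral_image_eq_integral_abs_deriv_smul measurableSet_Ioo inv_deriv
        (inv_injective.injOn) h,
      setIntegral_congr_fun measurableSet_Ioo inv_key, B_lemma.2]

lemma outer : IntegrableOn h (Ioi (0:ℝ)) ∧ ∫ x in Ioi (0:ℝ), h x = π ^ 2 / 4 := by
  have hsplit : Ioc (0:ℝ) 1 ∪ Ioi 1 = Ioi 0 := Ioc_union_Ioi_eq_Ioi zero_le_one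
  have hIoc : IntegrableOn h (Ioc (0:ℝ) 1) := by
    rw [integrableOn_Ioc_iff_integrableOn_Ioo]
    exact B_lemma.1
  have hdisj : Disjoint (Ioc (0:ℝ) 1) (Ioi 1) := Set.Ioc_disjoint_Ioi_same
  constructor
  · rw [← hsplit]
    exact hIoc.union C_lemma.1
  · rw [← hsplit, setIntegral_union hdisj measurableSet_Ioi hIoc C_lemma.1,
      integral_Ioc_eq_integral_Ioo, B_lemma.2, C_lemma.2]
    ring

lemma f_meas : Measurable (fun p : ℝ × ℝ => 1 / ((p.1 + 1) * (p.2 + 1) * (p.1 + p.2))) := by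
  apply Measurable.div measurable_const
  exact (((measurable_fst.add_const 1).mul (measurable_snd.add_const 1)).mul
    (measurable_fst.add measurable_snd))

lemma fx_eq (x : ℝ) : (fun y : ℝ => 1 / ((x + 1) * (y + 1) * (x + y)))
    = fun y : ℝ => (x + 1)⁻¹ * (1 / ((y + 1) * (x + y))) := by
  funext y
  rw [mul_assoc, one_div, mul_inv, one_div]

lemma ae_cond : ∀ᵐ x ∂(volume.restrict (Ioi (0:ℝ))), 0 < x ∧ x ≠ 1 := by
  have h1 : ∀ᵐ x : ℝ ∂volume, x ≠ 1 := by
    rw [ae_iff]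
    have : {x : ℝ | ¬x ≠ 1} = {1} := by ext x; simp
    rw [this]
    exact Real.volume_singleton
  filter_upwards [ae_restrict_mem measurableSet_Ioi, ae_mono Measure.restrict_le_self h1]
    with x hx hx1
  exact ⟨hx, hx1⟩

lemma inner_int {x : ℝ} (hx : 0 < x) (hx1 : x ≠ 1) :
    Integrable (fun y => 1 / ((x + 1) * (y + 1) * (x + y))) (volume.restrict (Ioi (0:ℝ))) := by
  rw [fx_eq]
  exact ((inner_eval hx hx1).1).const_mul _

lemma inner_val {x : ℝ} (hx : 0 < x) (hx1 : x ≠ 1) :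
    ∫ y in Ioi (0:ℝ), 1 / ((x + 1) * (y + 1) * (x + y)) = h x := by
  rw [fx_eq, integral_const_mul, (inner_eval hx hx1).2, h]
  rw [div_eq_mul_inv, div_eq_mul_inv, mul_inv]
  ring

theorem main :
    ∫ p in (Ioi (0 : ℝ) ×ˢ Ioi (0 : ℝ)),
      1 / ((p.1 + 1) * (p.2 + 1) * (p.1 + p.2)) = π ^ 2 / 4 := by
  have hmeas : (volume : Measure (ℝ × ℝ)).restrict (Ioi (0:ℝ) ×ˢ Ioi (0:ℝ))
      = (volume.restrict (Ioi (0:ℝ))).prod (volume.restrict (Ioi (0:ℝ))) := by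
    rw [Measure.volume_eq_prod, Measure.prod_restrict]
  rw [hmeas]
  have hInt : Integrable (fun p : ℝ × ℝ => 1 / ((p.1 + 1) * (p.2 + 1) * (p.1 + p.2)))
      ((volume.restrict (Ioi (0:ℝ))).prod (volume.restrict (Ioi (0:ℝ)))) := by
    rw [integrable_prod_iff (f_meas.aestronglyMeasurable)]
    constructor
    · filter_upwards [ae_cond] with x hx
      exact inner_int hx.1 hx.2
    · apply (outer.1.congr ?_)
      filter_upwards [ae_cond] with x hx
      rw [← inner_val hx.1 hx.2]
      apply setIntegral_congr_fun measurableSet_Ioi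
      intro y hy
      have hy0 : (0:ℝ) < y := hy
      have hx0 := hx.1
      simp only
      rw [Real.norm_of_nonneg (by positivity)]
  rw [integral_prod _ hInt]
  have : ∫ x in Ioi (0:ℝ), (∫ y in Ioi (0:ℝ), 1 / ((x + 1) * (y + 1) * (x + y)))
      = ∫ x in Ioi (0:ℝ), h x := by
    apply integral_congr_ae
    filter_upwards [ae_cond] with x hx
    exact inner_val hx.1 hx.2
  rw [this, outer.2]

end SunsetAux

theorem sunset_integral_at_pseudothreshold :
    ∫ p in (Ioi (0 : ℝ) ×ˢ Ioi (0 : ℝ)),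
      1 / ((p.1 + 1) * (p.2 + 1) * (p.1 + p.2)) = π ^ 2 / 4 :=
  SunsetAux.main
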